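/- Let 0 < s < 1. There exists a constant R_s > 0, depending only on s, such that for every integer j ≥ 1 and every v ∈ ℝ³, Σ_{i=1}^{3} |∂_{v_i}^j ⟨v⟩^{2/(1−s)}| ≤ ⟨v⟩^{2/(1−s) − 1} · R_s^j · j!, where ∂_{v_i}^j denotes the j-th partial derivative in the i-th coordinate of v. -/

import Mathlib

open Finset



noncomputable def Acoef (p : ℝ) : ℕ → ℕ → ℝ
  | 0, 0 => 1
  | 0, _ + 1 => 0
  | j + 1, 0 => 2 * (p - j) * Acoef p j 0
  | j + 1, k + 1 =>
      2 * (p - j + (k + 1)) * Acoef p j (k + 1) + ((j : ℝ) - 2 * k) * Acoef p j k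

lemma Acoef_eq_zero (p : ℝ) : ∀ j k, j < 2 * k → Acoef p j k = 0 := by
  intro j
  induction j with
  | zero =>
      intro k hk
      match k, hk with
      | k + 1, _ => rfl
  | succ j ih =>
      intro k hk
      match k with
      | 0 => omega
      | k + 1 =>
          have h1 : Acoef p j (k + 1) = 0 := ih _ (by omega)
          rcases Nat.lt_or_ge j (2 * k) with h | h
          · have h2 : Acoef p j k = 0 := ih _ h
            simp [Acoef, h1, h2]
          · have hj : j = 2 * k := by omega
            have : ((j : ℝ) - 2 * k) = 0 := by
              rw [hj]; push_cast; ring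
            simp [Acoef, h1, this]

lemma Acoef_succ_succ (p : ℝ) (j k : ℕ) : Acoef p (j + 1) (k + 1)
    = 2 * (p - j + ((k + 1 : ℕ) : ℝ)) * Acoef p j (k + 1) + ((j : ℝ) - 2 * k) * Acoef p j k := by
  simp [Acoef]

lemma Acoef_succ_zero (p : ℝ) (j : ℕ) : Acoef p (j + 1) 0 = 2 * (p - j) * Acoef p j 0 := by
  simp [Acoef]

lemma aux_shift (f : ℕ → ℝ) (n : ℕ) (h : f (n + 1) = 0) :
    ∑ k ∈ range (n + 1), f k = ∑ k ∈ range (n + 1), f (k + 1) + f 0 := by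
  rw [Finset.sum_range_succ'] ; rw [Finset.sum_range_succ (fun k => f (k + 1)) n, h, add_zero]

lemma deriv_formula (p c : ℝ) (hc : 0 < c) :
    ∀ j : ℕ, deriv^[j] (fun σ : ℝ => (c + σ ^ 2) ^ p) =
      fun σ : ℝ => ∑ k ∈ range (j + 1),
        Acoef p j k * (σ ^ (j - 2 * k) * (c + σ ^ 2) ^ (p - j + k)) := by
  intro j
  induction j with
  | zero =>
      simp [Acoef]
  | succ j ih =>
      rw [Function.iterate_succ_apply', ih]
      funext σ
      have hbase : (0:ℝ) < c + σ ^ 2 := by positivity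
      have hterm : ∀ k, HasDerivAt
          (fun σ : ℝ => Acoef p j k * (σ ^ (j - 2 * k) * (c + σ ^ 2) ^ (p - j + k)))
          (Acoef p j k * ((((j - 2 * k : ℕ) : ℝ) * σ ^ (j - 2 * k - 1)) * (c + σ ^ 2) ^ (p - j + k)
            + σ ^ (j - 2 * k) * ((p - j + k) * (c + σ ^ 2) ^ (p - j + k - 1) * (2 * σ ^ 1)))) σ := by
        intro k
        have hpow : HasDerivAt (fun σ : ℝ => σ ^ (j - 2 * k))
            (((j - 2 * k : ℕ) : ℝ) * σ ^ (j - 2 * k - 1)) σ := hasDerivAt_pow _ σ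
        have hinner : HasDerivAt (fun σ : ℝ => c + σ ^ 2) (2 * σ ^ 1) σ := by
          simpa using (hasDerivAt_pow 2 σ).const_add c
        have hrpow : HasDerivAt (fun σ : ℝ => (c + σ ^ 2) ^ (p - j + k))
            ((p - j + k) * (c + σ ^ 2) ^ (p - j + k - 1) * (2 * σ ^ 1)) σ :=
          by
            have := (Real.hasDerivAt_rpow_const (x := c + σ ^ 2) (p := p - j + k) (Or.inl hbase.ne')).comp σ hinner
            exact this
        exact ((hpow.mul hrpow)).const_mul _
      have hsum := HasDerivAt.fun_sum (u := range (j + 1)) (fun k _ => hterm k)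
      rw [hsum.deriv]
      -- abbreviation for target basis
      have key : ∀ k ∈ range (j + 1),
          Acoef p j k * ((((j - 2 * k : ℕ) : ℝ) * σ ^ (j - 2 * k - 1)) * (c + σ ^ 2) ^ (p - j + k)
            + σ ^ (j - 2 * k) * ((p - j + k) * (c + σ ^ 2) ^ (p - j + k - 1) * (2 * σ ^ 1)))
          = Acoef p j k * (((j : ℝ) - 2 * k) *
              (σ ^ (j + 1 - 2 * (k + 1)) * (c + σ ^ 2) ^ (p - (j + 1 : ℕ) + (k + 1 : ℕ))))
            + Acoef p j k * (2 * (p - (j : ℝ) + k) *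
              (σ ^ (j + 1 - 2 * k) * (c + σ ^ 2) ^ (p - (j + 1 : ℕ) + k))) := by
        intro k _
        rcases le_or_gt (2 * k) j with h | h
        · have h1 : ((j - 2 * k : ℕ) : ℝ) = (j : ℝ) - 2 * k := by push_cast [h]; ring
          have h2 : j - 2 * k - 1 = j + 1 - 2 * (k + 1) := by omega
          have h5 : p - (j : ℝ) + k - 1 = p - ((j + 1 : ℕ) : ℝ) + (k : ℝ) := by push_cast; ring
          have h3 : p - (j : ℝ) + k = p - ((j + 1 : ℕ) : ℝ) + ((k + 1 : ℕ) : ℝ) := by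
            push_cast; ring
          have h4 : j + 1 - 2 * k = (j - 2 * k) + 1 := by omega
          rw [h1, h2, h5, h3, h4]
          ring
        · have hz : Acoef p j k = 0 := Acoef_eq_zero p j k h
          simp [hz]
      rw [Finset.sum_congr rfl key, Finset.sum_add_distrib]
      conv_rhs => rw [Finset.sum_range_succ']
      have expand : ∀ k ∈ range (j + 1),
          Acoef p (j + 1) (k + 1) *
            (σ ^ (j + 1 - 2 * (k + 1)) * (c + σ ^ 2) ^ (p - (j + 1 : ℕ) + (k + 1 : ℕ)))
          = Acoef p j (k + 1) * (2 * (p - (j : ℝ) + ((k + 1 : ℕ) : ℝ)) *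
              (σ ^ (j + 1 - 2 * (k + 1)) * (c + σ ^ 2) ^ (p - (j + 1 : ℕ) + (k + 1 : ℕ))))
            + Acoef p j k * (((j : ℝ) - 2 * k) *
              (σ ^ (j + 1 - 2 * (k + 1)) * (c + σ ^ 2) ^ (p - (j + 1 : ℕ) + (k + 1 : ℕ)))) := by
        intro k _
        rw [Acoef_succ_succ]
        ring
      rw [Finset.sum_congr rfl expand, Finset.sum_add_distrib]
      -- remaining: L1 + L2 = (S + L1) + f0  → L2 = S + f0
      rw [aux_shift (fun k => Acoef p j k * (2 * (p - (j : ℝ) + k) *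
            (σ ^ (j + 1 - 2 * k) * (c + σ ^ 2) ^ (p - ((j + 1 : ℕ) : ℝ) + k)))) j
          (by simp [Acoef_eq_zero p j (j + 1) (by omega)]), Acoef_succ_zero]
      push_cast
      ring

lemma Acoef_sum_bound (p : ℝ) (hp : 1 ≤ p) :
    ∀ j, ∑ k ∈ range (j + 1), |Acoef p j k| ≤ (2 * p + 3) ^ j * (j.factorial : ℝ) := by
  intro j
  induction j with
  | zero => simp [Acoef]
  | succ j ih =>
      have hj0 : (0:ℝ) ≤ j := Nat.cast_nonneg j
      set S := ∑ k ∈ range (j + 1), |Acoef p j k| with hSdef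
      have hS0 : 0 ≤ S := Finset.sum_nonneg fun _ _ => abs_nonneg _
      have ha0 : |Acoef p j 0| ≤ S :=
        Finset.single_le_sum (f := fun k => |Acoef p j k|) (fun _ _ => abs_nonneg _)
          (Finset.mem_range.2 (by omega))
      have hshift : S = ∑ k ∈ range (j + 1), |Acoef p j (k + 1)| + |Acoef p j 0| :=
        aux_shift _ j (by simp [Acoef_eq_zero p j (j + 1) (by omega)])
      have hA0 : |Acoef p (j + 1) 0| ≤ 2 * (p + j) * |Acoef p j 0| := by
        rw [Acoef_succ_zero, abs_mul]
        have h1 : |2 * (p - (j : ℝ))| ≤ 2 * (p + j) := by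
          rw [abs_mul, abs_two]
          have : |p - (j : ℝ)| ≤ p + j := abs_le.2 ⟨by linarith, by linarith⟩
          linarith
        exact mul_le_mul_of_nonneg_right h1 (abs_nonneg _) |>.trans le_rfl
      have hAk : ∀ k ∈ range (j + 1), |Acoef p (j + 1) (k + 1)|
          ≤ 2 * (p + j + 1) * |Acoef p j (k + 1)| + j * |Acoef p j k| := by
        intro k hk
        have hkj : k ≤ j := by simpa [Nat.lt_succ_iff] using hk
        rw [Acoef_succ_succ]
        refine (abs_add_le _ _).trans (add_le_add ?_ ?_)
        · rw [abs_mul, abs_mul, abs_two]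
          have h1 : |p - (j : ℝ) + ((k + 1 : ℕ) : ℝ)| ≤ p + j + 1 := by
            have hk1 : ((k + 1 : ℕ) : ℝ) ≤ (j : ℝ) + 1 := by
              have : (k : ℝ) ≤ (j : ℝ) := Nat.cast_le.2 hkj
              push_cast; linarith
            have hk0 : (0:ℝ) ≤ ((k + 1 : ℕ) : ℝ) := Nat.cast_nonneg _
            exact abs_le.2 ⟨by linarith, by linarith⟩
          have := mul_le_mul_of_nonneg_right h1 (abs_nonneg (Acoef p j (k + 1)))
          nlinarith [abs_nonneg (Acoef p j (k + 1))]
        · rw [abs_mul]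
          rcases le_or_gt (2 * k) j with h | h
          · have h1 : |(j : ℝ) - 2 * k| ≤ j := by
              have : (2 * k : ℝ) ≤ (j : ℝ) := by exact_mod_cast h
              exact abs_le.2 ⟨by linarith [Nat.cast_nonneg k (α := ℝ)], by
                linarith [Nat.cast_nonneg k (α := ℝ)]⟩
            exact mul_le_mul_of_nonneg_right h1 (abs_nonneg _)
          · simp [Acoef_eq_zero p j k h]
      rw [Finset.sum_range_succ']
      have h1 : ∑ k ∈ range (j + 1), |Acoef p (j + 1) (k + 1)|
          ≤ 2 * (p + j + 1) * (∑ k ∈ range (j + 1), |Acoef p j (k + 1)|) + j * S := by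
        calc ∑ k ∈ range (j + 1), |Acoef p (j + 1) (k + 1)|
            ≤ ∑ k ∈ range (j + 1), (2 * (p + j + 1) * |Acoef p j (k + 1)| + j * |Acoef p j k|) :=
              Finset.sum_le_sum hAk
          _ = _ := by rw [Finset.sum_add_distrib, ← Finset.mul_sum, ← Finset.mul_sum]
      have hfac : ((j + 1).factorial : ℝ) = (j + 1) * (j.factorial : ℝ) := by
        push_cast [Nat.factorial_succ]; ring
      have hpow : (2 * p + 3) ^ (j + 1) = (2 * p + 3) * (2 * p + 3) ^ j := pow_succ' _ _
      have hB0 : (0:ℝ) ≤ (2 * p + 3) ^ j * (j.factorial : ℝ) := by positivity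
      set a := |Acoef p j 0| with hadef
      set T := ∑ k ∈ range (j + 1), |Acoef p j (k + 1)| with hTdef
      set B := (2 * p + 3) ^ j * (j.factorial : ℝ) with hBdef
      have hTa : T = S - a := by linarith [hshift]
      have key2 : 2 * (p + (j:ℝ) + 1) * T + (j:ℝ) * S + 2 * (p + (j:ℝ)) * a
          = (2 * p + 3 * (j:ℝ) + 2) * S - 2 * a := by rw [hTa]; ring
      have key4 : (2 * p + 3 * (j:ℝ) + 2) * S ≤ (2 * p + 3 * (j:ℝ) + 2) * B :=
        mul_le_mul_of_nonneg_left ih (by linarith)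
      have key5 : (2 * p + 3 * (j:ℝ) + 2) * B ≤ ((2 * p + 3) * ((j:ℝ) + 1)) * B :=
        mul_le_mul_of_nonneg_right (by nlinarith) hB0
      have key6 : (2 * p + 3) ^ (j + 1) * ((j + 1).factorial : ℝ)
          = ((2 * p + 3) * ((j:ℝ) + 1)) * B := by rw [hpow, hfac, hBdef]; ring
      have ha0' : (0:ℝ) ≤ a := abs_nonneg _
      linarith [h1, hA0]

lemma key_bound (p c : ℝ) (hp : 1 ≤ p) (hc : 1 ≤ c) (j : ℕ) (hj : 1 ≤ j) (x : ℝ) :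
    |deriv^[j] (fun σ : ℝ => (c + σ ^ 2) ^ p) x|
      ≤ (c + x ^ 2) ^ (p - 1 / 2) * ((2 * p + 3) ^ j * (j.factorial : ℝ)) := by
  rw [deriv_formula p c (by linarith) j]
  set X := c + x ^ 2 with hXdef
  have hX1 : (1:ℝ) ≤ X := by nlinarith [sq_nonneg x]
  have hX0 : (0:ℝ) < X := by linarith
  have hXp : (0:ℝ) ≤ X ^ (p - 1 / 2) := Real.rpow_nonneg hX0.le _
  have hterm : ∀ k ∈ range (j + 1),
      |Acoef p j k * (x ^ (j - 2 * k) * X ^ (p - j + k))|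
        ≤ |Acoef p j k| * X ^ (p - 1 / 2) := by
    intro k hk
    rw [abs_mul]
    rcases le_or_gt (2 * k) j with h | h
    · refine mul_le_mul_of_nonneg_left ?_ (abs_nonneg _)
      rw [abs_mul]
      have hx2 : |x| ≤ X ^ ((1:ℝ) / 2) := by
        rw [← Real.sqrt_eq_rpow]
        have : |x| = Real.sqrt (x ^ 2) := by
          rw [Real.sqrt_sq_eq_abs]
        rw [this]
        exact Real.sqrt_le_sqrt (by nlinarith)
      have h1 : |x ^ (j - 2 * k)| ≤ (X ^ ((1:ℝ) / 2)) ^ (j - 2 * k) := by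
        rw [abs_pow]
        exact pow_le_pow_left₀ (abs_nonneg x) hx2 _
      have h2 : (X ^ ((1:ℝ) / 2)) ^ (j - 2 * k) = X ^ (((j - 2 * k : ℕ) : ℝ) / 2) := by
        rw [← Real.rpow_natCast (X ^ ((1:ℝ) / 2)) (j - 2 * k), ← Real.rpow_mul hX0.le]
        ring_nf
      have h3 : |X ^ (p - (j:ℝ) + k)| = X ^ (p - (j:ℝ) + k) :=
        abs_of_nonneg (Real.rpow_nonneg hX0.le _)
      calc |x ^ (j - 2 * k)| * |X ^ (p - (j:ℝ) + k)|
          ≤ X ^ (((j - 2 * k : ℕ) : ℝ) / 2) * X ^ (p - (j:ℝ) + k) := by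
            rw [h3]
            exact mul_le_mul_of_nonneg_right (h1.trans_eq h2) (Real.rpow_nonneg hX0.le _)
        _ = X ^ (((j - 2 * k : ℕ) : ℝ) / 2 + (p - (j:ℝ) + k)) := (Real.rpow_add hX0 _ _).symm
        _ ≤ X ^ (p - 1 / 2) := by
            apply Real.rpow_le_rpow_of_exponent_le hX1
            have hcast : ((j - 2 * k : ℕ) : ℝ) = (j:ℝ) - 2 * k := by push_cast [h]; ring
            have hj1 : (1:ℝ) ≤ (j:ℝ) := by exact_mod_cast hj
            rw [hcast]; linarith
    · rw [Acoef_eq_zero p j k h]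
      simp [hXp]
  calc |∑ k ∈ range (j + 1), Acoef p j k * (x ^ (j - 2 * k) * X ^ (p - (j:ℝ) + k))|
      ≤ ∑ k ∈ range (j + 1), |Acoef p j k * (x ^ (j - 2 * k) * X ^ (p - (j:ℝ) + k))| :=
        Finset.abs_sum_le_sum_abs _ _
    _ ≤ ∑ k ∈ range (j + 1), |Acoef p j k| * X ^ (p - 1 / 2) := Finset.sum_le_sum hterm
    _ = (∑ k ∈ range (j + 1), |Acoef p j k|) * X ^ (p - 1 / 2) := by rw [Finset.sum_mul]
    _ ≤ ((2 * p + 3) ^ j * (j.factorial : ℝ)) * X ^ (p - 1 / 2) :=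
        mul_le_mul_of_nonneg_right (Acoef_sum_bound p hp j) hXp
    _ = X ^ (p - 1 / 2) * ((2 * p + 3) ^ j * (j.factorial : ℝ)) := by ring

/-- **Derivative bounds for the weight `⟨v⟩^{2/(1−s)}`.**
For `0 < s < 1` there is `R_s > 0` such that for every `j ≥ 1` and `v ∈ ℝ³`,
`Σᵢ |∂_{vᵢ}ʲ ⟨v⟩^{2/(1−s)}| ≤ ⟨v⟩^{2/(1−s)−1} R_sʲ j!`, where `⟨v⟩^p = (1+|v|²)^{p/2}` and
`∂_{vᵢ}ʲ` is the `j`-th partial derivative in the `i`-th coordinate. -/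
theorem japanese_bracket_power_deriv_bound (s : ℝ) (hs0 : 0 < s) (hs1 : s < 1) :
    ∃ R : ℝ, 0 < R ∧ ∀ j : ℕ, 1 ≤ j → ∀ v : Fin 3 → ℝ,
      ∑ i : Fin 3,
          |deriv^[j]
              (fun σ : ℝ => (1 + ∑ m : Fin 3, Function.update v i σ m ^ 2) ^ (1 / (1 - s)))
              (v i)|
        ≤ (1 + ∑ m : Fin 3, v m ^ 2) ^ ((2 / (1 - s) - 1) / 2) * R ^ j * (j.factorial : ℝ) := by
  have hs : (0:ℝ) < 1 - s := by linarith
  set p : ℝ := 1 / (1 - s) with hpdef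
  have hp : 1 ≤ p := by
    rw [hpdef, le_div_iff₀ hs]; linarith
  refine ⟨3 * (2 * p + 3), by nlinarith, fun j hj v => ?_⟩
  set X : ℝ := 1 + ∑ m : Fin 3, v m ^ 2 with hXdef
  have hX1 : (1:ℝ) ≤ X := by
    have : (0:ℝ) ≤ ∑ m : Fin 3, v m ^ 2 := Finset.sum_nonneg fun m _ => sq_nonneg _
    linarith
  have hexp : (2 / (1 - s) - 1) / 2 = p - 1 / 2 := by rw [hpdef]; ring
  have hXp : (0:ℝ) ≤ X ^ (p - 1 / 2) := Real.rpow_nonneg (by linarith) _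
  have hbound : ∀ i : Fin 3,
      |deriv^[j] (fun σ : ℝ => (1 + ∑ m : Fin 3, Function.update v i σ m ^ 2) ^ (1 / (1 - s)))
        (v i)| ≤ X ^ (p - 1 / 2) * ((2 * p + 3) ^ j * (j.factorial : ℝ)) := by
    intro i
    set c : ℝ := 1 + ∑ m ∈ (Finset.univ \ {i} : Finset (Fin 3)), v m ^ 2 with hcdef
    have hc : 1 ≤ c := by
      have : (0:ℝ) ≤ ∑ m ∈ (Finset.univ \ {i} : Finset (Fin 3)), v m ^ 2 :=
        Finset.sum_nonneg fun m _ => sq_nonneg _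
      rw [hcdef]; linarith
    have hfun : (fun σ : ℝ => (1 + ∑ m : Fin 3, Function.update v i σ m ^ 2) ^ (1 / (1 - s)))
        = fun σ : ℝ => (c + σ ^ 2) ^ p := by
      funext σ
      rw [hpdef]
      congr 1
      have hupd : ∀ m : Fin 3, Function.update v i σ m ^ 2
          = Function.update (fun m => v m ^ 2) i (σ ^ 2) m := fun m =>
        Function.apply_update (fun _ x => x ^ 2) v i σ m
      rw [Finset.sum_congr rfl fun m _ => hupd m,
        Finset.sum_update_of_mem (Finset.mem_univ i), hcdef]
      ring
    have hXc : X = c + (v i) ^ 2 := by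
      rw [hXdef, hcdef, ← Finset.erase_eq,
        ← Finset.add_sum_erase Finset.univ (fun m => v m ^ 2) (Finset.mem_univ i)]
      ring
    rw [hfun, hXc]
    exact key_bound p c hp hc j hj (v i)
  calc ∑ i : Fin 3, |deriv^[j] _ (v i)|
      ≤ ∑ _i : Fin 3, X ^ (p - 1 / 2) * ((2 * p + 3) ^ j * (j.factorial : ℝ)) :=
        Finset.sum_le_sum fun i _ => hbound i
    _ = 3 * (X ^ (p - 1 / 2) * ((2 * p + 3) ^ j * (j.factorial : ℝ))) := by
        simp [Finset.card_univ]
    _ ≤ X ^ ((2 / (1 - s) - 1) / 2) * (3 * (2 * p + 3)) ^ j * (j.factorial : ℝ) := by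
        rw [hexp, mul_pow]
        have h3 : (3:ℝ) ≤ 3 ^ j := by
          calc (3:ℝ) = 3 ^ 1 := (pow_one 3).symm
          _ ≤ 3 ^ j := pow_le_pow_right₀ (by norm_num) hj
        have hpos : (0:ℝ) ≤ (2 * p + 3) ^ j * (j.factorial : ℝ) := by positivity
        calc 3 * (X ^ (p - 1 / 2) * ((2 * p + 3) ^ j * (j.factorial : ℝ)))
            = X ^ (p - 1 / 2) * (3 * ((2 * p + 3) ^ j * (j.factorial : ℝ))) := by ring
          _ ≤ X ^ (p - 1 / 2) * (3 ^ j * ((2 * p + 3) ^ j * (j.factorial : ℝ))) := by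
              refine mul_le_mul_of_nonneg_left ?_ hXp
              exact mul_le_mul_of_nonneg_right h3 hpos
          _ = X ^ (p - 1 / 2) * (3 ^ j * (2 * p + 3) ^ j) * (j.factorial : ℝ) := by ring
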